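/- For every closed formula φ of SHMLnf, the synthesized transducer ⟦φ⟧e enforces φ; consequently the logic SHMLnf is enforceable. Concretely: (i) for every system p, if φ is satisfiable then ⟦φ⟧e[p] ∈ ⟦φ⟧, and (ii) for every system p, if p ∈ ⟦φ⟧ then ⟦φ⟧e[p] ∼ p. -/

import Mathlib

set_option autoImplicit false

/-- A labelled transition system over observable actions `Act`;
`none` plays the role of the silent action τ. -/
structure LTS (Act : Type) where
  S : Type
  Tr : S → Option Act → S → Prop

namespace Enf

open scoped Classical

variable {Act : Type}

/-- Zero or more silent steps. -/
def TauStar (L : LTS Act) : L.S → L.S → Prop :=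
  Relation.ReflTransGen (fun p q => L.Tr p none q)

/-- The weak transition `p =a=> q`. -/
def WStep (L : LTS Act) (p : L.S) (a : Act) (q : L.S) : Prop :=
  ∃ p₁ p₂, TauStar L p p₁ ∧ L.Tr p₁ (some a) p₂ ∧ TauStar L p₂ q

/-- Weak trace `p =t=> q`. -/
inductive WTrace (L : LTS Act) : L.S → List Act → L.S → Prop
  | nil {p q : L.S} : TauStar L p q → WTrace L p [] q
  | cons {p r q : L.S} {a : Act} {t : List Act} :
      WStep L p a r → WTrace L r t q → WTrace L p (a :: t) q

/-- SHML formulas: truth, falsehood, fixpoint variables, finite conjunctions,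
modalities `[η]φ` (a guard set of actions together with an action-indexed
continuation, representing the symbolic action and the matching substitutions),
and greatest fixpoints. -/
inductive Frm (Act : Type) : Type where
  | tt : Frm Act
  | ff : Frm Act
  | var : ℕ → Frm Act
  | conj : (n : ℕ) → (Fin n → Frm Act) → Frm Act
  | box : Set Act → (Act → Frm Act) → Frm Act
  | max : ℕ → Frm Act → Frm Act

namespace Frm

/-- Free fixpoint variables. -/
def fv : Frm Act → Set ℕ
  | .tt => ∅
  | .ff => ∅
  | .var X => {X}
  | .conj _ f => ⋃ i, fv (f i)
  | .box G k => ⋃ a ∈ G, fv (k a)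
  | .max X φ => fv φ \ {X}

def Closed (φ : Frm Act) : Prop := fv φ = ∅

/-- Substitution `φ[ψ/X]` (of a closed formula `ψ`). -/
def subst : Frm Act → ℕ → Frm Act → Frm Act
  | .tt, _, _ => .tt
  | .ff, _, _ => .ff
  | .var Y, X, ψ => if Y = X then ψ else .var Y
  | .conj n f, X, ψ => .conj n (fun i => subst (f i) X ψ)
  | .box G k, X, ψ => .box G (fun a => subst (k a) X ψ)
  | .max Y φ, X, ψ => if Y = X then .max Y φ else .max Y (subst φ X ψ)

/-- The normal-form fragment SHMLnf: conjunctions are conjunctions of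
modalities with pairwise-disjoint guards, and each greatest fixpoint binds a
variable occurring free in its body. -/
inductive IsNF : Frm Act → Prop
  | tt : IsNF .tt
  | ff : IsNF .ff
  | var (X : ℕ) : IsNF (.var X)
  | conj (n : ℕ) (G : Fin n → Set Act) (k : Fin n → Act → Frm Act)
      (hdisj : ∀ i j : Fin n, i ≠ j → ∀ a : Act, a ∈ G i → a ∉ G j)
      (hk : ∀ i : Fin n, ∀ a ∈ G i, IsNF (k i a)) :
      IsNF (.conj n fun i => .box (G i) (k i))
  | max (X : ℕ) (φ : Frm Act) (hfree : X ∈ fv φ) (hφ : IsNF φ) : IsNF (.max X φ)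

/-- `gvar X φ`: the variable `X` does not occur unguarded (i.e. outside every
modality) in `φ`. -/
def gvar (X : ℕ) : Frm Act → Prop
  | .tt => True
  | .ff => True
  | .var Y => Y ≠ X
  | .conj _ f => ∀ i, gvar X (f i)
  | .box _ _ => True
  | .max Y φ => Y = X ∨ gvar X φ

/-- A formula is guarded if every occurrence of a fixpoint variable lies
beneath a modality. -/
def Guarded : Frm Act → Prop
  | .tt => True
  | .ff => True
  | .var _ => True
  | .conj _ f => ∀ i, Guarded (f i)
  | .box G k => ∀ a ∈ G, Guarded (k a)
  | .max X φ => gvar X φ ∧ Guarded φ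

/-- Number of top-level greatest-fixpoint binders. -/
def topMax : Frm Act → ℕ
  | .max _ φ => topMax φ + 1
  | _ => 0

end Frm

/-- Denotational semantics of (possibly open) formulas, relative to an
environment mapping fixpoint variables to sets of states; `max` is interpreted
as the greatest fixpoint of the induced monotone map. -/
def sem (L : LTS Act) : Frm Act → (ℕ → Set L.S) → Set L.S
  | .tt, _ => Set.univ
  | .ff, _ => ∅
  | .var X, ρ => ρ X
  | .conj _ f, ρ => ⋂ i, sem L (f i) ρ
  | .box G k, ρ => {p | ∀ a ∈ G, ∀ q, WStep L p a q → q ∈ sem L (k a) ρ}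
  | .max X φ, ρ => ⋃₀ {S | S ⊆ sem L φ (Function.update ρ X S)}

/-- Semantics of closed formulas. -/
def Sem (L : LTS Act) (φ : Frm Act) : Set L.S := sem L φ fun _ => ∅

/-- Satisfiability. -/
def SatIn (L : LTS Act) (φ : Frm Act) : Prop := (Sem L φ).Nonempty

/-- The violation relation `p ⊨v^t φ`, defined as the least relation closed
under the given rules. -/
inductive Viol (L : LTS Act) : L.S → List Act → Frm Act → Prop
  | ff (p : L.S) : Viol L p [] .ff
  | conj {p : L.S} {t : List Act} {n : ℕ} {f : Fin n → Frm Act} (j : Fin n) :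
      Viol L p t (f j) → Viol L p t (.conj n f)
  | box {p p' : L.S} {t : List Act} {a : Act} {G : Set Act} {k : Act → Frm Act} :
      a ∈ G → WStep L p a p' → Viol L p' t (k a) → Viol L p (a :: t) (.box G k)
  | max {p : L.S} {t : List Act} {X : ℕ} {φ : Frm Act} :
      Viol L p t (Frm.subst φ X (.max X φ)) → Viol L p t (.max X φ)

/-- Transducers (enforcement monitors): identity, symbolic transformation
prefixes (a guard set of extended input actions, with `none` standing for the
insertion pattern •, an output per matched input, with `none` standing for τ,
and a continuation per matched input), finite selections, recursion, and
recursion variables. -/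
inductive Trn (Act : Type) : Type where
  | id : Trn Act
  | prf : Set (Option Act) → (Option Act → Option Act) → (Option Act → Trn Act) → Trn Act
  | sel : (n : ℕ) → (Fin n → Trn Act) → Trn Act
  | fix : ℕ → Trn Act → Trn Act
  | var : ℕ → Trn Act

namespace Trn

def tsubst : Trn Act → ℕ → Trn Act → Trn Act
  | .id, _, _ => .id
  | .prf G out k, x, s => .prf G out fun γ => tsubst (k γ) x s
  | .sel n f, x, s => .sel n fun i => tsubst (f i) x s
  | .fix y e, x, s => if y = x then .fix y e else .fix y (tsubst e x s)
  | .var y, x, s => if y = x then s else .var y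

end Trn

/-- Transducer transitions: labels are pairs (input, output) where input
`none` is the insertion pattern • and output `none` is τ. -/
inductive TStep : Trn Act → Option Act × Option Act → Trn Act → Prop
  | id (a : Act) : TStep .id (some a, some a) .id
  | prf {G : Set (Option Act)} {out : Option Act → Option Act}
      {k : Option Act → Trn Act} {γ : Option Act} (h : γ ∈ G) :
      TStep (.prf G out k) (γ, out γ) (k γ)
  | sel {n : ℕ} {f : Fin n → Trn Act} {l : Option Act × Option Act}
      {e' : Trn Act} (i : Fin n) (h : TStep (f i) l e') :
      TStep (.sel n f) l e'
  | fix {x : ℕ} {e : Trn Act} {l : Option Act × Option Act} {e' : Trn Act}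
      (h : TStep (Trn.tsubst e x (.fix x e)) l e') :
      TStep (.fix x e) l e'

/-- Instrumentation of a transducer on a system. -/
inductive IStep (L : LTS Act) : Trn Act × L.S → Option Act → Trn Act × L.S → Prop
  | trn {e e' : Trn Act} {p p' : L.S} {a : Act} {μ : Option Act} :
      L.Tr p (some a) p' → TStep e (some a, μ) e' → IStep L (e, p) μ (e', p')
  | asy {e : Trn Act} {p p' : L.S} :
      L.Tr p none p' → IStep L (e, p) none (e, p')
  | ins {e e' : Trn Act} {p : L.S} {μ : Option Act} :
      TStep e (none, μ) e' → IStep L (e, p) μ (e', p)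
  | ter {e : Trn Act} {p p' : L.S} {a : Act} :
      L.Tr p (some a) p' →
      (∀ μ e', ¬ TStep e (some a, μ) e') →
      (∀ μ e', ¬ TStep e (none, μ) e') →
      IStep L (e, p) (some a) (Trn.id, p')

/-- The LTS of monitored systems `e[p]`. -/
def instLTS (L : LTS Act) : LTS Act := ⟨Trn Act × L.S, IStep L⟩

/-- Strong bisimulations between (the state spaces of) two LTSs. -/
def IsBisim (L₁ L₂ : LTS Act) (R : L₁.S → L₂.S → Prop) : Prop :=
  ∀ s r, R s r →
    (∀ μ s', L₁.Tr s μ s' → ∃ r', L₂.Tr r μ r' ∧ R s' r') ∧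
    (∀ μ r', L₂.Tr r μ r' → ∃ s', L₁.Tr s μ s' ∧ R s' r')

/-- Strong bisimilarity. -/
def Bisim (L₁ L₂ : LTS Act) (s : L₁.S) (r : L₂.S) : Prop :=
  ∃ R, IsBisim L₁ L₂ R ∧ R s r

/-- The synthesis function `⟦-⟧e` from SHMLnf formulas to transducers:
formula variable `X` becomes monitor variable `X+1`; `tt` and `ff` become the
identity monitor; `max X.φ` becomes the corresponding recursive monitor; and a
normalised conjunction of modalities becomes a recursive selection (on the
fresh variable `0`) of symbolic prefixes that suppress (output τ, continue as
the recursion variable) actions whose continuation formula is `ff` and pass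
through all other matched actions, continuing with the synthesis of the
respective continuation formula. -/
noncomputable def synth : Frm Act → Trn Act
  | .tt => .id
  | .ff => .id
  | .var X => .var (X + 1)
  | .max X φ => .fix (X + 1) (synth φ)
  | .box G k =>
      .prf {γ | ∃ a ∈ G, γ = some a}
        (fun γ =>
          match γ with
          | some a => if k a = Frm.ff then none else some a
          | none => none)
        (fun γ =>
          match γ with
          | some a => if k a = Frm.ff then Trn.var 0 else synth (k a)
          | none => .id)
  | .conj n f => .fix 0 (.sel n fun i => synth (f i))

/-- Fuelled residual function (the fuel is consumed by fixpoint unfoldings;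
on guarded closed SHMLnf formulas `topMax φ + 1` units of fuel suffice). -/
noncomputable def afterFuel : ℕ → Frm Act → Act → Frm Act
  | 0, _, _ => .tt
  | n + 1, φ, a =>
    match φ with
    | .max X ψ => afterFuel n (Frm.subst ψ X (.max X ψ)) a
    | .conj m f =>
        if h : ∃ i : Fin m, ∃ G : Set Act, ∃ k : Act → Frm Act,
            f i = Frm.box G k ∧ a ∈ G
        then h.choose_spec.choose_spec.choose a
        else .tt
    | ψ => ψ

/-- The residual `after(φ, a)` of a guarded closed SHMLnf formula. -/
noncomputable def after (φ : Frm Act) (a : Act) : Frm Act :=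
  afterFuel (Frm.topMax φ + 1) φ a

/-- Satisfaction relations (the coinductive rules of `⊨s`). -/
def IsSatRel (L : LTS Act) (R : L.S → Frm Act → Prop) : Prop :=
  (∀ p, ¬ R p .ff) ∧
  (∀ p (n : ℕ) (f : Fin n → Frm Act), R p (.conj n f) → ∀ i, R p (f i)) ∧
  (∀ p (G : Set Act) (k : Act → Frm Act), R p (.box G k) →
      ∀ a ∈ G, ∀ q, WStep L p a q → R q (k a)) ∧
  (∀ p (X : ℕ) (φ : Frm Act), R p (.max X φ) → R p (Frm.subst φ X (.max X φ)))

/-- The largest satisfaction relation `⊨s`. -/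
def SatCo (L : LTS Act) (p : L.S) (φ : Frm Act) : Prop :=
  ∃ R, IsSatRel L R ∧ R p φ



/-! ### Auxiliary lemmas -/

section Aux

variable {Act : Type}

open Frm

theorem fv_subst_closed {χ : Frm Act} (hχ : χ.Closed) :
    ∀ (φ : Frm Act) (X : ℕ), fv (subst φ X χ) = fv φ \ {X} := by
  intro φ
  induction φ with
  | tt => intro X; simp [subst, fv]
  | ff => intro X; simp [subst, fv]
  | var Y => intro X
             by_cases h : Y = X
             · subst h
               rw [show subst (var Y) Y χ = χ by simp [subst]]
               rw [show χ.fv = ∅ from hχ]; ext Z; simp [fv]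
             · simp only [subst, if_neg h, fv]
               ext Z; simp
               rintro rfl; exact h
  | conj n f ih =>
      intro X
      simp only [subst, fv]
      ext Z; simp [ih]; try tauto
  | box G k ih =>
      intro X
      simp only [subst, fv]
      ext Z; simp [ih]; try tauto
  | max Y φ ih =>
      intro X
      by_cases h : Y = X
      · subst h
        simp only [subst, if_pos rfl, fv]
        ext Z; simp [fv]; try tauto
      · simp only [subst, if_neg h, fv, ih]
        ext Z; simp; try tauto

theorem closed_subst {X : ℕ} {b : Frm Act} (h : Closed (.max X b)) :
    Closed (subst b X (.max X b)) := by
  unfold Closed at *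
  rw [fv_subst_closed h]
  simpa [fv] using h

theorem subst_eq_ff_iff {χ : Frm Act} (hχ : χ ≠ .ff) (φ : Frm Act) (X : ℕ) :
    subst φ X χ = .ff ↔ φ = .ff := by
  cases φ <;> simp only [subst] <;>
    first
    | (split <;> simp_all)
    | simp

theorem nf_subst {χ : Frm Act} (hχc : χ.Closed) (hχ : χ.IsNF) :
    ∀ {φ : Frm Act}, φ.IsNF → ∀ X : ℕ, (subst φ X χ).IsNF := by
  intro φ h
  induction h with
  | tt => intro X; exact .tt
  | ff => intro X; exact .ff
  | var Y => intro X
             by_cases h : Y = X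
             · simpa [subst, h] using hχ
             · simpa [subst, h] using .var Y
  | conj n G k hdisj hk ih =>
      intro X
      simp only [subst]
      exact .conj n G (fun i a => subst (k i a) X χ) hdisj (fun i a ha => ih i a ha X)
  | max Y φ hfree hφ ih =>
      intro X
      by_cases h : Y = X
      · simpa [subst, h] using IsNF.max Y φ hfree hφ
      · simp only [subst, if_neg h]
        refine .max Y _ ?_ (ih X)
        rw [fv_subst_closed hχc]
        exact ⟨hfree, h⟩

theorem sem_congr (L : LTS Act) :
    ∀ (φ : Frm Act) (ρ ρ' : ℕ → Set L.S), (∀ X ∈ fv φ, ρ X = ρ' X) → sem L φ ρ = sem L φ ρ' := by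
  intro φ
  induction φ with
  | tt => intros; rfl
  | ff => intros; rfl
  | var X => intro ρ ρ' h; exact h X (by simp [fv])
  | conj n f ih =>
      intro ρ ρ' h
      simp only [sem]
      exact Set.iInter_congr fun i => ih i ρ ρ' (fun X hX => h X (by simp [fv]; exact ⟨i, hX⟩))
  | box G k ih =>
      intro ρ ρ' h
      ext p
      simp only [sem, Set.mem_setOf_eq]
      constructor <;> intro hp a ha q hw
      · rw [← ih a ρ ρ' fun X hX => h X (by simp [fv]; exact ⟨a, ha, hX⟩)]
        exact hp a ha q hw
      · rw [ih a ρ ρ' fun X hX => h X (by simp [fv]; exact ⟨a, ha, hX⟩)]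
        exact hp a ha q hw
  | max X φ ih =>
      intro ρ ρ' h
      simp only [sem]
      refine congrArg Set.sUnion ?_
      ext S
      simp only [Set.mem_setOf_eq]
      rw [ih (Function.update ρ X S) (Function.update ρ' X S) ?_]
      intro Y hY
      rcases eq_or_ne Y X with rfl | hne
      · simp
      · simp only [Function.update_of_ne hne]
        exact h Y (by simp [fv]; exact ⟨hY, hne⟩)

theorem sem_closed_congr (L : LTS Act) {χ : Frm Act} (hχ : χ.Closed)
    (ρ ρ' : ℕ → Set L.S) : sem L χ ρ = sem L χ ρ' :=
  sem_congr L χ ρ ρ' fun X hX => absurd (hχ ▸ hX) (Set.notMem_empty X)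

theorem update_mono {L : LTS Act} {ρ ρ' : ℕ → Set L.S} (h : ∀ X, ρ X ⊆ ρ' X)
    (X : ℕ) {A B : Set L.S} (hAB : A ⊆ B) :
    ∀ Y, Function.update ρ X A Y ⊆ Function.update ρ' X B Y := by
  intro Y
  rcases eq_or_ne Y X with rfl | hne
  · simpa using hAB
  · simpa [Function.update_of_ne hne] using h Y

theorem sem_mono (L : LTS Act) :
    ∀ (φ : Frm Act) (ρ ρ' : ℕ → Set L.S), (∀ X, ρ X ⊆ ρ' X) → sem L φ ρ ⊆ sem L φ ρ' := by
  intro φ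
  induction φ with
  | tt => intro _ _ _; simp [sem]
  | ff => intro _ _ _; simp [sem]
  | var X => intro ρ ρ' h; exact h X
  | conj n f ih =>
      intro ρ ρ' h p hp
      simp only [sem, Set.mem_iInter] at hp ⊢
      exact fun i => ih i ρ ρ' h (hp i)
  | box G k ih =>
      intro ρ ρ' h p hp
      simp only [sem, Set.mem_setOf_eq] at hp ⊢
      exact fun a ha q hw => ih a ρ ρ' h (hp a ha q hw)
  | max X φ ih =>
      intro ρ ρ' h p hp
      obtain ⟨S, hS, hpS⟩ := hp
      exact ⟨S, le_trans hS (ih (Function.update ρ X S) (Function.update ρ' X S)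
        (update_mono h X (le_refl S))), hpS⟩

theorem sem_subst (L : LTS Act) {χ : Frm Act} (hχ : χ.Closed) :
    ∀ (φ : Frm Act) (X : ℕ) (ρ : ℕ → Set L.S),
      sem L (subst φ X χ) ρ = sem L φ (Function.update ρ X (sem L χ ρ)) := by
  intro φ
  induction φ with
  | tt => intros; rfl
  | ff => intros; rfl
  | var Y =>
      intro X ρ
      rcases eq_or_ne Y X with rfl | hne
      · simp [subst, sem]
      · simp [subst, hne, sem, Function.update_of_ne hne]
  | conj n f ih =>
      intro X ρ
      simp only [subst, sem]
      exact Set.iInter_congr fun i => ih i X ρ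
  | box G k ih =>
      intro X ρ
      ext p
      simp only [subst, sem, Set.mem_setOf_eq]
      constructor <;> intro hp a ha q hw
      · rw [← ih a X ρ]; exact hp a ha q hw
      · rw [ih a X ρ]; exact hp a ha q hw
  | max Y φ ih =>
      intro X ρ
      rcases eq_or_ne Y X with rfl | hne
      · simp only [subst, if_pos rfl]
        refine sem_congr L (.max Y φ) _ _ ?_
        intro Z hZ
        have hZY : Z ≠ Y := by simp [fv] at hZ; exact hZ.2
        simp [Function.update_of_ne hZY]
      · simp only [subst, if_neg hne, sem]
        refine congrArg Set.sUnion ?_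
        ext S
        simp only [Set.mem_setOf_eq]
        rw [ih X (Function.update ρ Y S)]
        rw [sem_closed_congr L hχ (Function.update ρ Y S) ρ]
        rw [Function.update_comm hne]

theorem sem_max_fixed (L : LTS Act) (X : ℕ) (φ : Frm Act) (ρ : ℕ → Set L.S) :
    sem L (.max X φ) ρ = sem L φ (Function.update ρ X (sem L (.max X φ) ρ)) := by
  have hsub : sem L (.max X φ) ρ ⊆ sem L φ (Function.update ρ X (sem L (.max X φ) ρ)) := by
    rintro p ⟨S, hS, hpS⟩
    refine sem_mono L φ _ _ (update_mono (fun _ => le_refl _) X ?_) (hS hpS)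
    intro q hq
    exact ⟨S, hS, hq⟩
  refine le_antisymm hsub ?_
  intro p hp
  exact ⟨sem L φ (Function.update ρ X (sem L (.max X φ) ρ)),
    sem_mono L φ _ _ (update_mono (fun _ => le_refl _) X hsub), hp⟩

theorem Sem_unfstep (L : LTS Act) {X : ℕ} {b : Frm Act} (h : Closed (.max X b)) :
    Sem L (.max X b) = Sem L (subst b X (.max X b)) := by
  unfold Sem
  rw [sem_subst L h b X (fun _ => ∅)]
  exact sem_max_fixed L X b fun _ => ∅

theorem mem_of_taustar {L : LTS Act} {T : Set L.S}
    (hT : ∀ q q', q ∈ T → L.Tr q none q' → q' ∈ T) {q q' : L.S}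
    (h : TauStar L q q') (hq : q ∈ T) : q' ∈ T := by
  induction h with
  | refl => exact hq
  | tail _ hs ihh => exact hT _ _ ihh hs

theorem sem_tau_closed (L : LTS Act) :
    ∀ (φ : Frm Act) (ρ : ℕ → Set L.S),
      (∀ X p p', p ∈ ρ X → L.Tr p none p' → p' ∈ ρ X) →
      ∀ p p', p ∈ sem L φ ρ → L.Tr p none p' → p' ∈ sem L φ ρ := by
  intro φ
  induction φ with
  | tt => intro ρ _ p p' _ _; simp [sem]
  | ff => intro ρ _ p p' hp _; exact absurd hp (by simp [sem])
  | var X => intro ρ hρ p p' hp hs; exact hρ X p p' hp hs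
  | conj n f ih =>
      intro ρ hρ p p' hp hs
      simp only [sem, Set.mem_iInter] at hp ⊢
      exact fun i => ih i ρ hρ p p' (hp i) hs
  | box G k ih =>
      intro ρ hρ p p' hp hs
      simp only [sem, Set.mem_setOf_eq] at hp ⊢
      rintro a ha q ⟨p₁, p₂, ht1, hstep, ht2⟩
      exact hp a ha q ⟨p₁, p₂, Relation.ReflTransGen.head hs ht1, hstep, ht2⟩
  | max X φ ih =>
      intro ρ hρ p p' hp hs
      obtain ⟨S, hS, hpS⟩ := hp
      set Sd : Set L.S := {q' | ∃ q ∈ S, TauStar L q q'} with hSdDef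
      have hτ : ∀ q q', q ∈ Sd → L.Tr q none q' → q' ∈ Sd := by
        rintro q q' ⟨r, hr, ht⟩ hstep
        exact ⟨r, hr, ht.tail hstep⟩
      have henv : ∀ Y q q', q ∈ Function.update ρ X Sd Y → L.Tr q none q' →
          q' ∈ Function.update ρ X Sd Y := by
        intro Y
        rcases eq_or_ne Y X with rfl | hne
        · simpa using hτ
        · simpa [Function.update_of_ne hne] using hρ Y
      have hpost : Sd ⊆ sem L φ (Function.update ρ X Sd) := by
        rintro q' ⟨q, hq, ht⟩
        have h0 : q ∈ sem L φ (Function.update ρ X Sd) :=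
          sem_mono L φ _ _ (update_mono (fun _ => le_refl _) X
            (fun r hr => by rw [hSdDef]; exact ⟨r, hr, Relation.ReflTransGen.refl⟩)) (hS hq)
        exact mem_of_taustar (T := sem L φ (Function.update ρ X Sd))
          (fun r r' hr hsr => ih _ henv r r' hr hsr) ht h0
      show p' ∈ ⋃₀ {S | S ⊆ sem L φ (Function.update ρ X S)}
      exact ⟨Sd, hpost, ⟨p, hpS, Relation.ReflTransGen.single hs⟩⟩

theorem Sem_tau {L : LTS Act} {φ : Frm Act} {p p' : L.S}
    (hp : p ∈ Sem L φ) (hs : L.Tr p none p') : p' ∈ Sem L φ :=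
  sem_tau_closed L φ _ (fun _ _ _ h _ => absurd h (Set.notMem_empty _)) p p' hp hs

theorem Sem_taustar {L : LTS Act} {φ : Frm Act} {p p' : L.S}
    (ht : TauStar L p p') (hp : p ∈ Sem L φ) : p' ∈ Sem L φ :=
  mem_of_taustar (fun _ _ hq hs => Sem_tau hq hs) ht hp

/-! ### Cleaning substitution -/

/-- Formulas whose box continuations are trivial off the guard. -/
def IsClean : Frm Act → Prop
  | .tt => True
  | .ff => True
  | .var _ => True
  | .conj _ f => ∀ i, IsClean (f i)
  | .box G k => ∀ a, (a ∈ G → IsClean (k a)) ∧ (a ∉ G → k a = .tt)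
  | .max _ b => IsClean b

/-- Simultaneous cleaning substitution. -/
noncomputable def msubst : Frm Act → (ℕ → Frm Act) → Frm Act
  | .tt, _ => .tt
  | .ff, _ => .ff
  | .var Y, σ => σ Y
  | .conj n f, σ => .conj n (fun i => msubst (f i) σ)
  | .box G k, σ => .box G (fun a => if a ∈ G then msubst (k a) σ else .tt)
  | .max Y b, σ => .max Y (msubst b (Function.update σ Y (.var Y)))

theorem msubst_clean : ∀ (φ : Frm Act) (σ : ℕ → Frm Act),
    (∀ Y ∈ fv φ, IsClean (σ Y)) → IsClean (msubst φ σ) := by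
  intro φ
  induction φ with
  | tt => intro σ _; trivial
  | ff => intro σ _; trivial
  | var Y => intro σ h; exact h Y (by simp [fv])
  | conj n f ih =>
      intro σ h
      exact fun i => ih i σ fun Y hY => h Y (by simp [fv]; exact ⟨i, hY⟩)
  | box G k ih =>
      intro σ h a
      constructor
      · intro ha
        simp only [if_pos ha]
        exact ih a σ fun Y hY => h Y (by simp [fv]; exact ⟨a, ha, hY⟩)
      · intro ha; simp only [if_neg ha]
  | max X b ih =>
      intro σ h
      refine ih _ fun Y hY => ?_
      rcases eq_or_ne Y X with rfl | hne
      · simp [IsClean]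
      · rw [Function.update_of_ne hne]
        exact h Y (by simp [fv]; exact ⟨hY, hne⟩)

theorem fv_msubst : ∀ (φ : Frm Act) (σ : ℕ → Frm Act),
    (∀ Y, Closed (σ Y) ∨ σ Y = .var Y) →
    fv (msubst φ σ) = ⋃ Y ∈ fv φ, fv (σ Y) := by
  intro φ
  induction φ with
  | tt => intro σ _; simp [msubst, fv]
  | ff => intro σ _; simp [msubst, fv]
  | var Y => intro σ _; simp [msubst, fv]
  | conj n f ih =>
      intro σ hσ
      simp only [msubst, fv]
      ext Z
      simp only [Set.mem_iUnion, ih _ σ hσ]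
      aesop
  | box G k ih =>
      intro σ hσ
      simp only [msubst, fv]
      ext Z
      simp only [Set.mem_iUnion]
      constructor
      · rintro ⟨a, ha, hZ⟩
        rw [if_pos ha, ih a σ hσ] at hZ
        simp only [Set.mem_iUnion] at hZ
        obtain ⟨Y, hY, hZ⟩ := hZ
        exact ⟨Y, ⟨a, ha, hY⟩, hZ⟩
      · rintro ⟨Y, ⟨a, ha, hY⟩, hZ⟩
        refine ⟨a, ha, ?_⟩
        rw [if_pos ha, ih a σ hσ]
        simp only [Set.mem_iUnion]
        exact ⟨Y, hY, hZ⟩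
  | max X b ih =>
      intro σ hσ
      simp only [msubst, fv]
      have hσ' : ∀ Y, Closed (Function.update σ X (Frm.var X) Y) ∨
          Function.update σ X (Frm.var X) Y = .var Y := by
        intro Y
        rcases eq_or_ne Y X with rfl | hne
        · right; simp
        · rw [Function.update_of_ne hne]; exact hσ Y
      rw [ih _ hσ']
      ext Z
      simp only [Set.mem_iUnion, Set.mem_diff, Set.mem_singleton_iff]
      constructor
      · rintro ⟨⟨Y, hY, hZ⟩, hZX⟩
        rcases eq_or_ne Y X with rfl | hne
        · simp [fv] at hZ; exact absurd hZ hZX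
        · rw [Function.update_of_ne hne] at hZ
          exact ⟨Y, ⟨hY, hne⟩, hZ⟩
      · rintro ⟨Y, ⟨hY, hne⟩, hZ⟩
        refine ⟨⟨Y, hY, by rw [Function.update_of_ne hne]; exact hZ⟩, ?_⟩
        rcases hσ Y with hc | hv
        · intro hZX; rw [hc] at hZ; exact hZ
        · rw [hv] at hZ; simp [fv] at hZ; subst hZ; exact hne

/-- Substitution is the identity on clean formulas avoiding the variable. -/
theorem subst_clean_closed : ∀ (ψ : Frm Act), IsClean ψ → ∀ (X : ℕ) (χ : Frm Act),
    X ∉ fv ψ → subst ψ X χ = ψ := by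
  intro ψ
  induction ψ with
  | tt => intros; rfl
  | ff => intros; rfl
  | var Y => intro _ X χ h; simp [fv] at h; simp [subst, Ne.symm h]
  | conj n f ih =>
      intro hc X χ h
      simp only [fv, Set.mem_iUnion, not_exists] at h
      simp only [subst]
      congr 1
      funext i
      exact ih i (hc i) X χ (h i)
  | box G k ih =>
      intro hc X χ h
      simp only [fv, Set.mem_iUnion, not_exists] at h
      simp only [subst]
      congr 1
      funext a
      by_cases ha : a ∈ G
      · exact ih a ((hc a).1 ha) X χ (h a ha)
      · rw [(hc a).2 ha]; rfl
  | max Y b ih =>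
      intro hc X χ h
      rcases eq_or_ne Y X with rfl | hne
      · simp [subst]
      · simp only [subst, if_neg hne]
        congr 1
        refine ih hc X χ fun hx => h ?_
        simp [fv]
        exact ⟨hx, fun hh => hne (hh ▸ rfl)⟩

/-- Key composition: single substitution after the cleaning simultaneous
substitution. -/
theorem subst_msubst : ∀ (φ : Frm Act) (σ : ℕ → Frm Act) (X : ℕ) (χ : Frm Act),
    (∀ Y ∈ fv φ, Y ≠ X → subst (σ Y) X χ = σ Y) →
    subst (msubst φ (Function.update σ X (.var X))) X χ
      = msubst φ (Function.update σ X χ) := by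
  intro φ
  induction φ with
  | tt => intros; rfl
  | ff => intros; rfl
  | var Y =>
      intro σ X χ h
      rcases eq_or_ne Y X with rfl | hne
      · simp [msubst, subst]
      · simp only [msubst, Function.update_of_ne hne]
        exact h Y (by simp [fv]) hne
  | conj n f ih =>
      intro σ X χ h
      simp only [msubst, subst]
      congr 1
      funext i
      exact ih i σ X χ fun Y hY hne => h Y (by simp [fv]; exact ⟨i, hY⟩) hne
  | box G k ih =>
      intro σ X χ h
      simp only [msubst, subst]
      congr 1
      funext a
      by_cases ha : a ∈ G
      · simp only [if_pos ha]
        exact ih a σ X χ fun Y hY hne => h Y (by simp [fv]; exact ⟨a, ha, hY⟩) hne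
      · simp only [if_neg ha]; rfl
  | max Z b ih =>
      intro σ X χ h
      rcases eq_or_ne Z X with rfl | hne
      · simp [msubst, subst]
      · simp only [msubst, subst, if_neg hne]
        congr 1
        rw [Function.update_comm hne.symm, Function.update_comm hne.symm]
        refine ih _ X χ fun Y hY hneY => ?_
        rcases eq_or_ne Y Z with rfl | hneZ
        · rw [Function.update_self]
          simp [subst, hne]
        · rw [Function.update_of_ne hneZ]
          exact h Y (by simp [fv]; exact ⟨hY, hneZ⟩) hneY

/-- Semantics of the cleaning substitution. -/
theorem sem_msubst (L : LTS Act) : ∀ (φ : Frm Act) (σ : ℕ → Frm Act)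
    (ρ : ℕ → Set L.S), (∀ Y ∈ fv φ, Closed (σ Y) ∨ σ Y = .var Y) →
    sem L (msubst φ σ) ρ = sem L φ (fun Y => sem L (σ Y) ρ) := by
  intro φ
  induction φ with
  | tt => intros; rfl
  | ff => intros; rfl
  | var Y => intros; rfl
  | conj n f ih =>
      intro σ ρ h
      simp only [msubst, sem]
      exact Set.iInter_congr fun i => ih i σ ρ fun Y hY => h Y (by simp [fv]; exact ⟨i, hY⟩)
  | box G k ih =>
      intro σ ρ h
      ext p
      simp only [msubst, sem, Set.mem_setOf_eq]
      constructor <;> intro hp a ha q hw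
      · have := hp a ha q hw
        rwa [if_pos ha, ih a σ ρ (fun Y hY => h Y (by simp [fv]; exact ⟨a, ha, hY⟩))] at this
      · rw [if_pos ha, ih a σ ρ (fun Y hY => h Y (by simp [fv]; exact ⟨a, ha, hY⟩))]
        exact hp a ha q hw
  | max X b ih =>
      intro σ ρ h
      simp only [msubst, sem]
      refine congrArg Set.sUnion ?_
      ext S
      simp only [Set.mem_setOf_eq]
      rw [ih _ (Function.update ρ X S) ?side]
      case side =>
        intro Y hY
        rcases eq_or_ne Y X with rfl | hne
        · right; simp
        · rw [Function.update_of_ne hne]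
          exact h Y (by simp [fv]; exact ⟨hY, hne⟩)
      have henv : sem L b
            (fun Y => sem L (Function.update σ X (Frm.var X) Y) (Function.update ρ X S))
          = sem L b (Function.update (fun Y => sem L (σ Y) ρ) X S) := by
        refine sem_congr L b _ _ fun Y hY => ?_
        rcases eq_or_ne Y X with rfl | hne
        · simp [sem]
        · rw [Function.update_of_ne hne, Function.update_of_ne hne]
          rcases h Y (by simp [fv]; exact ⟨hY, hne⟩) with hc | hv
          · exact sem_closed_congr L hc _ _
          · rw [hv]
            simp only [sem]
            rw [Function.update_of_ne hne]
      rw [henv]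

/-- The bridge: any satisfaction relation is contained in the denotational
semantics, through the cleaning substitution. -/
theorem bridge {L : LTS Act} {R : L.S → Frm Act → Prop} (hR : IsSatRel L R) :
    ∀ (φ : Frm Act) (σ : ℕ → Frm Act),
      (∀ Y, Closed (σ Y) ∨ σ Y = .var Y) →
      (∀ Y ∈ fv φ, Closed (σ Y) ∧ IsClean (σ Y)) →
      ∀ p, R p (msubst φ σ) → p ∈ sem L φ (fun Y => {q | R q (σ Y)}) := by
  obtain ⟨hff, hconj, hbox, hmax⟩ := hR
  intro φ
  induction φ with
  | tt => intro σ _ _ p _; simp [sem]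
  | ff => intro σ _ _ p hp; exact absurd hp (hff p)
  | var Y => intro σ _ _ p hp; exact hp
  | conj n f ih =>
      intro σ hg hc p hp
      simp only [sem, Set.mem_iInter]
      intro i
      exact ih i σ hg (fun Y hY => hc Y (by simp [fv]; exact ⟨i, hY⟩)) p
        (hconj p n _ hp i)
  | box G k ih =>
      intro σ hg hc p hp
      simp only [sem, Set.mem_setOf_eq]
      intro a ha q hw
      have := hbox p _ _ hp a ha q hw
      simp only [if_pos ha] at this
      exact ih a σ hg (fun Y hY => hc Y (by simp [fv]; exact ⟨a, ha, hY⟩)) q this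
  | max X b ih =>
      intro σ hg hc p hp
      set Ψ : Frm Act := msubst b (Function.update σ X (.var X)) with hΨ
      have hΨfv : fv Ψ ⊆ {X} := by
        rw [hΨ, fv_msubst b _ ?_]
        · intro Z hZ
          simp only [Set.mem_iUnion] at hZ
          obtain ⟨Y, hY, hZ⟩ := hZ
          rcases eq_or_ne Y X with rfl | hne
          · simpa [fv] using hZ
          · rw [Function.update_of_ne hne] at hZ
            rcases hc Y (by simp [fv]; exact ⟨hY, hne⟩) with ⟨hcl, _⟩
            rw [hcl] at hZ
            exact absurd hZ (Set.notMem_empty Z)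
        · intro Y
          rcases eq_or_ne Y X with rfl | hne
          · right; simp
          · rw [Function.update_of_ne hne]; exact hg Y
      have hΘc : Closed (Frm.max X Ψ) := by
        unfold Frm.Closed
        simp only [fv]
        rw [Set.diff_eq_empty]
        exact hΨfv
      have hΘclean : IsClean (Frm.max X Ψ) := by
        show IsClean Ψ
        refine msubst_clean b _ fun Y hY => ?_
        rcases eq_or_ne Y X with rfl | hne
        · simp [IsClean]
        · rw [Function.update_of_ne hne]
          exact (hc Y (by simp [fv]; exact ⟨hY, hne⟩)).2
      -- the invariant set
      refine ⟨{q | R q (Frm.max X Ψ)}, ?_, hp⟩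
      intro q hq
      have hq' : R q (subst Ψ X (Frm.max X Ψ)) := hmax q X Ψ hq
      rw [subst_msubst b σ X (Frm.max X Ψ) ?subid] at hq'
      case subid =>
        intro Y hY hne
        rcases hc Y (by simp [fv]; exact ⟨hY, hne⟩) with ⟨hcl, hcln⟩
        exact subst_clean_closed _ hcln X _ (by rw [hcl]; exact Set.notMem_empty X)
      have := ih (Function.update σ X (Frm.max X Ψ)) ?g' ?c' q hq'
      case g' =>
        intro Y
        rcases eq_or_ne Y X with rfl | hne
        · left; simpa using hΘc
        · rw [Function.update_of_ne hne]; exact hg Y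
      case c' =>
        intro Y hY
        rcases eq_or_ne Y X with rfl | hne
        · simpa using ⟨hΘc, hΘclean⟩
        · rw [Function.update_of_ne hne]
          exact hc Y (by simp [fv]; exact ⟨hY, hne⟩)
      convert this using 2
      funext Y
      rcases eq_or_ne Y X with rfl | hne
      · simp
      · rw [Function.update_of_ne hne, Function.update_of_ne hne]

/-! ### Unfolding -/

/-- One fixpoint unfolding. -/
inductive UnfStep : Frm Act → Frm Act → Prop
  | mk (X : ℕ) (b : Frm Act) : UnfStep (.max X b) (subst b X (.max X b))

/-- Iterated unfolding. -/
def Unf : Frm Act → Frm Act → Prop := Relation.ReflTransGen UnfStep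

theorem unfstep_closed_nf {ψ χ : Frm Act} (h : UnfStep ψ χ) (hc : Closed ψ) (hn : IsNF ψ) :
    Closed χ ∧ IsNF χ ∧ χ ≠ .ff := by
  cases h with
  | mk X b =>
      have hb : IsNF b ∧ X ∈ fv b := by
        cases hn with
        | max X b hfree hb => exact ⟨hb, hfree⟩
      refine ⟨closed_subst hc, nf_subst hc hn hb.1 X, ?_⟩
      intro hff
      rw [subst_eq_ff_iff (by simp) b X] at hff
      subst hff
      simpa [fv] using hb.2

theorem unf_closed_nf {ψ χ : Frm Act} (h : Unf ψ χ) (hc : Closed ψ) (hn : IsNF ψ) :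
    Closed χ ∧ IsNF χ := by
  induction h with
  | refl => exact ⟨hc, hn⟩
  | tail _ hstep ih =>
      obtain ⟨hc₁, hn₁⟩ := ih
      obtain ⟨h1, h2, _⟩ := unfstep_closed_nf hstep hc₁ hn₁
      exact ⟨h1, h2⟩

theorem unf_ne_ff {ψ χ : Frm Act} (h : Unf ψ χ) (hc : Closed ψ) (hn : IsNF ψ)
    (hff : ψ ≠ .ff) : χ ≠ .ff := by
  rcases Relation.ReflTransGen.cases_tail h with rfl | ⟨b, hb, hstep⟩
  · exact hff
  · obtain ⟨hc₁, hn₁⟩ := unf_closed_nf hb hc hn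
    exact (unfstep_closed_nf hstep hc₁ hn₁).2.2

theorem unf_sem {ψ χ : Frm Act} (h : Unf ψ χ) (hc : Closed ψ) (hn : IsNF ψ)
    (L : LTS Act) : Sem L ψ = Sem L χ := by
  induction h with
  | refl => rfl
  | tail hb hstep ih =>
      obtain ⟨hc₁, hn₁⟩ := unf_closed_nf hb hc hn
      cases hstep with
      | mk X b => exact ih.trans (Sem_unfstep L hc₁)

theorem unfstep_det {ψ α β : Frm Act} (h1 : UnfStep ψ α) (h2 : UnfStep ψ β) : α = β := by
  cases h1; cases h2; rfl

theorem unf_total {x y z : Frm Act} (hxy : Unf x y) (hxz : Unf x z) :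
    Unf y z ∨ Unf z y := by
  induction hxz with
  | refl => exact Or.inr hxy
  | tail hxb hstep ih =>
      rcases ih with h | h
      · exact Or.inl (h.tail hstep)
      · rcases Relation.ReflTransGen.cases_head h with rfl | ⟨w, hbw, hwy⟩
        · exact Or.inl (Relation.ReflTransGen.single hstep)
        · rw [unfstep_det hstep hbw]
          exact Or.inr hwy

theorem unf_to_terminal {x y z : Frm Act} (hxy : Unf x y) (hxz : Unf x z)
    (hterm : ∀ w, ¬ UnfStep z w) : Unf y z := by
  rcases unf_total hxy hxz with h | h
  · exact h
  · rcases Relation.ReflTransGen.cases_head h with rfl | ⟨w, hzw, _⟩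
    · exact Relation.ReflTransGen.refl
    · exact absurd hzw (hterm w)

theorem unfstep_conj {n : ℕ} {f : Fin n → Frm Act} {χ : Frm Act} :
    ¬ UnfStep (.conj n f) χ := by rintro ⟨⟩

theorem unfstep_tt {χ : Frm Act} : ¬ UnfStep (.tt : Frm Act) χ := by rintro ⟨⟩
theorem unfstep_ff {χ : Frm Act} : ¬ UnfStep (.ff : Frm Act) χ := by rintro ⟨⟩

/-! ### Cleaning -/

/-- The cleaning operation. -/
noncomputable def clean (φ : Frm Act) : Frm Act := msubst φ (fun Y => .var Y)

theorem clean_conj {n : ℕ} {f : Fin n → Frm Act} :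
    clean (.conj n f) = .conj n (fun i => clean (f i)) := rfl

theorem clean_box {G : Set Act} {k : Act → Frm Act} :
    clean (.box G k) = .box G (fun a => if a ∈ G then clean (k a) else .tt) := rfl

theorem msubst_varid_update (b : Frm Act) (Y : ℕ) :
    msubst b (Function.update (fun Z => Frm.var Z) Y (.var Y)) = clean b := by
  rw [show (Frm.var Y : Frm Act) = (fun Z => (Frm.var Z : Frm Act)) Y from rfl,
    Function.update_eq_self]
  rfl

theorem clean_max {X : ℕ} {b : Frm Act} : clean (.max X b) = .max X (clean b) := by
  show Frm.max X (msubst b (Function.update (fun Y => Frm.var Y) X (.var X))) = _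
  rw [msubst_varid_update]

theorem clean_subst : ∀ (b : Frm Act) (X : ℕ) (χ : Frm Act),
    clean (subst b X χ) = subst (clean b) X (clean χ) := by
  intro b
  induction b with
  | tt => intros; rfl
  | ff => intros; rfl
  | var Y =>
      intro X χ
      rcases eq_or_ne Y X with rfl | hne
      · simp [subst, clean, msubst]
      · simp [subst, clean, msubst, hne]
  | conj n f ih =>
      intro X χ
      simp only [subst, clean_conj]
      congr 1
      funext i
      exact ih i X χ
  | box G k ih =>
      intro X χ
      simp only [subst, clean_box]
      congr 1
      funext a
      by_cases ha : a ∈ G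
      · simp only [if_pos ha]
        exact ih a X χ
      · simp only [if_neg ha, subst]
  | max Y b ih =>
      intro X χ
      rcases eq_or_ne Y X with rfl | hne
      · rw [show subst (Frm.max Y b) Y χ = Frm.max Y b by simp [subst]]
        rw [show subst (clean (Frm.max Y b)) Y (clean χ) = clean (Frm.max Y b) by
          rw [clean_max]; simp [subst]]
      · simp only [subst, if_neg hne, clean_max]
        rw [ih X χ]

theorem fv_clean (φ : Frm Act) : fv (clean φ) = fv φ := by
  unfold clean
  rw [fv_msubst φ _ (fun Y => Or.inr rfl)]
  ext Z
  simp [fv]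

theorem closed_clean {φ : Frm Act} (h : Closed φ) : Closed (clean φ) := by
  unfold Closed at *
  rw [fv_clean]; exact h

theorem clean_eq_ff_iff {ψ : Frm Act} : clean ψ = .ff ↔ ψ = .ff := by
  cases ψ <;> simp [clean, msubst]

theorem nf_clean {ψ : Frm Act} (h : IsNF ψ) : IsNF (clean ψ) := by
  induction h with
  | tt => exact .tt
  | ff => exact .ff
  | var X => exact .var X
  | conj n G k hdisj hk ih =>
      rw [clean_conj]
      simp only [clean_box]
      exact .conj n G (fun i a => if a ∈ G i then clean (k i a) else .tt) hdisj
        (fun i a ha => by simpa [ha] using ih i a ha)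
  | max X b hfree hb ih =>
      rw [clean_max]
      exact .max X (clean b) (by rw [fv_clean]; exact hfree) ih

theorem isclean_clean (φ : Frm Act) : IsClean (clean φ) :=
  msubst_clean φ _ (fun Y _ => trivial)

theorem clean_unfstep {ψ χ : Frm Act} (h : UnfStep ψ χ) : UnfStep (clean ψ) (clean χ) := by
  cases h with
  | mk X b =>
      rw [clean_max, clean_subst, clean_max]
      exact UnfStep.mk X (clean b)

theorem clean_unf {ψ χ : Frm Act} (h : Unf ψ χ) : Unf (clean ψ) (clean χ) := by
  induction h with
  | refl => exact .refl
  | tail _ hstep ih => exact ih.tail (clean_unfstep hstep)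

/-! ### Monitor synthesis lemmas -/

theorem tsubst0_synth (s : Trn Act) : ∀ {ψ : Frm Act}, ψ.IsNF →
    Trn.tsubst (synth ψ) 0 s = synth ψ := by
  intro ψ h
  induction h with
  | tt => rfl
  | ff => rfl
  | var X => simp [synth, Trn.tsubst]
  | conj n G k hdisj hk ih => simp [synth, Trn.tsubst]
  | max X b hfree hb ih =>
      simp only [synth, Trn.tsubst, if_neg (by omega : ¬(X + 1 = 0))]
      rw [ih]

theorem tsubst_synth_comm (X : ℕ) (χ : Frm Act) (hχ : χ ≠ .ff) :
    ∀ φ : Frm Act, Trn.tsubst (synth φ) (X+1) (synth χ) = synth (subst φ X χ) := by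
  intro φ
  induction φ with
  | tt => rfl
  | ff => rfl
  | var Y =>
      rcases eq_or_ne Y X with rfl | hne
      · simp [synth, subst, Trn.tsubst]
      · have h1 : Y + 1 ≠ X + 1 := by omega
        simp [synth, subst, Trn.tsubst, hne, h1]
  | conj n f ih =>
      simp only [synth, subst, Trn.tsubst, if_neg (by omega : ¬(0 = X + 1))]
      congr 2
      funext i
      exact ih i
  | box G k ih =>
      simp only [synth, subst, Trn.tsubst]
      congr 1
      · funext γ
        cases γ with
        | none => rfl
        | some a =>
            show (if k a = .ff then none else some a)
              = (if subst (k a) X χ = .ff then none else some a)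
            rw [subst_eq_ff_iff hχ]
      · funext γ
        cases γ with
        | none => rfl
        | some a =>
            by_cases hff : k a = .ff
            · have hff' : subst (k a) X χ = .ff := by rw [subst_eq_ff_iff hχ]; exact hff
              show Trn.tsubst (if k a = .ff then .var 0 else synth (k a)) (X+1) (synth χ)
                = (if subst (k a) X χ = .ff then .var 0 else synth (subst (k a) X χ))
              rw [if_pos hff, if_pos hff']
              simp [Trn.tsubst]
            · have hff' : subst (k a) X χ ≠ .ff := fun h => hff ((subst_eq_ff_iff hχ _ _).1 h)
              show Trn.tsubst (if k a = .ff then .var 0 else synth (k a)) (X+1) (synth χ)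
                = (if subst (k a) X χ = .ff then .var 0 else synth (subst (k a) X χ))
              rw [if_neg hff, if_neg hff']
              exact ih a
  | max Y b ih =>
      rcases eq_or_ne Y X with rfl | hne
      · simp [synth, subst, Trn.tsubst]
      · have h1 : Y + 1 ≠ X + 1 := by omega
        simp only [synth, subst, Trn.tsubst, if_neg h1, if_neg hne]
        rw [ih]

theorem conj_inj {n n' : ℕ} {f : Fin n → Frm Act} {f' : Fin n' → Frm Act}
    (h : Frm.conj n f = Frm.conj n' f') : ∃ he : n = n', ∀ i, f i = f' (Fin.cast he i) := by
  injection h with h1 h2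
  subst h1
  exact ⟨rfl, fun i => congrFun (eq_of_heq h2) i⟩

theorem nf_conj_inv {n : ℕ} {f : Fin n → Frm Act} (h : IsNF (.conj n f)) :
    ∃ (G : Fin n → Set Act) (k : Fin n → Act → Frm Act),
      f = (fun i => .box (G i) (k i)) ∧
      (∀ i j, i ≠ j → ∀ a ∈ G i, a ∉ G j) ∧
      (∀ i, ∀ a ∈ G i, IsNF (k i a)) := by
  cases h with
  | conj n G k hdisj hk => exact ⟨G, k, rfl, hdisj, hk⟩

theorem closed_conj_comp {n : ℕ} {G : Fin n → Set Act} {k : Fin n → Act → Frm Act}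
    (hc : Closed (.conj n (fun j => .box (G j) (k j)))) (i : Fin n) {a : Act}
    (ha : a ∈ G i) : Closed (k i a) := by
  unfold Closed at *
  simp only [fv, Set.iUnion_eq_empty] at hc
  have := hc i
  exact this a ha

theorem synth_tt : synth (.tt : Frm Act) = .id := by simp [synth]
theorem synth_ff : synth (.ff : Frm Act) = .id := by simp [synth]
theorem synth_var (X : ℕ) : synth (.var X : Frm Act) = .var (X+1) := by simp [synth]
theorem synth_conj {n : ℕ} {f : Fin n → Frm Act} :
    synth (.conj n f) = .fix 0 (.sel n fun i => synth (f i)) := by simp [synth]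
theorem synth_max {X : ℕ} {b : Frm Act} :
    synth (.max X b) = .fix (X+1) (synth b) := by simp [synth]
theorem synth_box {G : Set Act} {k : Act → Frm Act} :
    synth (.box G k) = .prf {γ | ∃ a ∈ G, γ = some a}
      (fun γ => match γ with
        | some a => if k a = Frm.ff then none else some a
        | none => none)
      (fun γ => match γ with
        | some a => if k a = Frm.ff then Trn.var 0 else synth (k a)
        | none => .id) := by simp [synth]

/-- The main inversion lemma for transitions of synthesised monitors. -/
theorem syn_inv {e : Trn Act} {l : Option Act × Option Act} {e' : Trn Act}
    (h : TStep e l e') :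
    ∀ ψ : Frm Act, Closed ψ → IsNF ψ → e = synth ψ →
    ∃ a : Act, l.1 = some a ∧
      ((l.2 = some a ∧ e' = .id ∧ ∃ χ, Unf ψ χ ∧ (χ = .tt ∨ χ = .ff)) ∨
        ∃ (n : ℕ) (G : Fin n → Set Act) (k : Fin n → Act → Frm Act) (i : Fin n),
          Unf ψ (.conj n (fun j => .box (G j) (k j))) ∧
          (∀ i' j, i' ≠ j → ∀ b ∈ G i', b ∉ G j) ∧
          (∀ i', ∀ b ∈ G i', IsNF (k i' b)) ∧
          a ∈ G i ∧
          ((k i a = .ff ∧ l.2 = none ∧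
              e' = synth (.conj n (fun j => .box (G j) (k j)))) ∨
            (k i a ≠ .ff ∧ l.2 = some a ∧ e' = synth (k i a)))) := by
  induction h with
  | id a =>
      intro ψ hc hn he
      have hψ : ψ = .tt ∨ ψ = .ff := by
        cases ψ
        case tt => exact Or.inl rfl
        case ff => exact Or.inr rfl
        case var X => rw [synth_var] at he; cases he
        case conj n f => rw [synth_conj] at he; cases he
        case box G k => rw [synth_box] at he; cases he
        case max X b => rw [synth_max] at he; cases he
      exact ⟨a, rfl, Or.inl ⟨rfl, rfl, ψ, Relation.ReflTransGen.refl, hψ⟩⟩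
  | prf hγ =>
      intro ψ hc hn he
      cases ψ
      case box G k => cases hn
      case tt => rw [synth_tt] at he; cases he
      case ff => rw [synth_ff] at he; cases he
      case var X => rw [synth_var] at he; cases he
      case conj n f => rw [synth_conj] at he; cases he
      case max X b => rw [synth_max] at he; cases he
  | sel i hstep ih =>
      intro ψ hc hn he
      cases ψ
      case tt => rw [synth_tt] at he; cases he
      case ff => rw [synth_ff] at he; cases he
      case var X => rw [synth_var] at he; cases he
      case conj n f => rw [synth_conj] at he; cases he
      case box G k => rw [synth_box] at he; cases he
      case max X b => rw [synth_max] at he; cases he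
  | fix hprem ih =>
      intro ψ hc hn he
      cases ψ
      case tt => rw [synth_tt] at he; cases he
      case ff => rw [synth_ff] at he; cases he
      case var X => rw [synth_var] at he; cases he
      case box G k => rw [synth_box] at he; cases he
      case conj n f =>
        obtain ⟨G, k, hf, hdisj, hk⟩ := nf_conj_inv hn
        subst hf
        rw [synth_conj] at he
        injection he with hx he2
        subst hx; subst he2
        cases hprem with
        | sel i hstep =>
            rw [show ((fun j => Trn.tsubst (synth (.box (G j) (k j))) 0
                  (.fix 0 (.sel n fun j => synth (.box (G j) (k j))))) i)
                = Trn.tsubst (synth (.box (G i) (k i))) 0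
                  (.fix 0 (.sel n fun j => synth (.box (G j) (k j)))) from rfl,
              synth_box] at hstep
            cases hstep with
            | prf hγ =>
                obtain ⟨a, ha, rfl⟩ := hγ
                refine ⟨a, rfl, Or.inr ⟨n, G, k, i, Relation.ReflTransGen.refl,
                  hdisj, hk, ha, ?_⟩⟩
                by_cases hff : k i a = .ff
                · refine Or.inl ⟨hff, ?_, ?_⟩
                  · show (if k i a = .ff then none else some a) = none
                    rw [if_pos hff]
                  · show Trn.tsubst
                        (if k i a = .ff then (.var 0 : Trn Act) else synth (k i a)) 0 _ = _
                    rw [if_pos hff, synth_conj]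
                    rfl
                · refine Or.inr ⟨hff, ?_, ?_⟩
                  · show (if k i a = .ff then none else some a) = some a
                    rw [if_neg hff]
                  · show Trn.tsubst
                        (if k i a = .ff then (.var 0 : Trn Act) else synth (k i a)) 0 _ = _
                    rw [if_neg hff]
                    exact tsubst0_synth _ (hk i a ha)
      case max X b =>
        have hb : IsNF b ∧ X ∈ fv b := by
          cases hn with
          | max X b hfree hb => exact ⟨hb, hfree⟩
        rw [synth_max] at he
        injection he with hx he2
        subst hx; subst he2
        have hkey : Trn.tsubst (synth b) (X+1) (.fix (X+1) (synth b))
            = synth (subst b X (.max X b)) := by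
          rw [← synth_max]
          exact tsubst_synth_comm X (.max X b) (by simp) b
        obtain ⟨a, hl1, hrest⟩ := ih (subst b X (.max X b)) (closed_subst hc)
          (nf_subst hc hn hb.1 X) hkey
        refine ⟨a, hl1, ?_⟩
        have hpre : Unf (.max X b) (subst b X (.max X b)) :=
          Relation.ReflTransGen.single (UnfStep.mk X b)
        rcases hrest with ⟨h1, h2, χ, hU, hχ⟩ | ⟨n, G, k, i, hU, hdisj, hk, ha, hbr⟩
        · exact Or.inl ⟨h1, h2, χ, hpre.trans hU, hχ⟩
        · exact Or.inr ⟨n, G, k, i, hpre.trans hU, hdisj, hk, ha, hbr⟩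

/-- Synthesised monitors of conjunctions always afford a transition on guarded
actions. -/
theorem conj_step_exists {n : ℕ} {G : Fin n → Set Act} {k : Fin n → Act → Frm Act}
    (i : Fin n) {a : Act} (ha : a ∈ G i) :
    ∃ (μ : Option Act) (e' : Trn Act),
      TStep (synth (.conj n (fun j => .box (G j) (k j)))) (some a, μ) e' := by
  have hγ : (some a : Option Act) ∈ {γ : Option Act | ∃ b ∈ G i, γ = some b} :=
    ⟨a, ha, rfl⟩
  have h1 : TStep (Trn.tsubst (synth (.box (G i) (k i))) 0
      (.fix 0 (.sel n fun j => synth (.box (G j) (k j)))))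
      (some a, (fun γ : Option Act => match γ with
        | some b => if k i b = .ff then none else some b
        | none => none) (some a))
      ((fun γ : Option Act => Trn.tsubst (match γ with
        | some b => if k i b = .ff then .var 0 else synth (k i b)
        | none => .id) 0 (.fix 0 (.sel n fun j => synth (.box (G j) (k j))))) (some a)) := by
    rw [synth_box]
    exact TStep.prf hγ
  have h2 := TStep.sel
    (f := fun j => Trn.tsubst (synth (.box (G j) (k j))) 0
      (.fix 0 (.sel n fun j => synth (.box (G j) (k j))))) i h1
  rw [synth_conj]
  exact ⟨_, _, TStep.fix h2⟩

/-- Monitored systems keep the shape `⟦ψ'⟧[q']` along silent steps. -/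
theorem tau_inv {L : LTS Act} {e : Trn Act} {q : L.S} {s' : Trn Act × L.S}
    (h : TauStar (instLTS L) (e, q) s') :
    ∀ ψ : Frm Act, Closed ψ → IsNF ψ → e = synth ψ →
    ∃ (χ : Frm Act) (q' : L.S), s' = (synth χ, q') ∧ Unf ψ χ := by
  induction h with
  | refl => intro ψ hc hn he; exact ⟨ψ, q, by rw [he], Relation.ReflTransGen.refl⟩
  | tail hst hstep ih =>
      intro ψ hc hn he
      obtain ⟨χ₁, q₁, rfl, hU⟩ := ih ψ hc hn he
      obtain ⟨hc₁, hn₁⟩ := unf_closed_nf hU hc hn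
      cases hstep with
      | trn htr hT =>
          obtain ⟨a, hl1, hrest⟩ := syn_inv hT χ₁ hc₁ hn₁ rfl
          rcases hrest with ⟨h2, _, _⟩ | ⟨n, G, k, i, hU2, hdisj, hk, haG, hbr⟩
          · exact absurd h2 (by simp)
          · rcases hbr with ⟨hff, h2, he'⟩ | ⟨hnff, h2, he'⟩
            · exact ⟨_, _, by rw [he'], hU.trans hU2⟩
            · exact absurd h2 (by simp)
      | asy htr => exact ⟨χ₁, _, rfl, hU⟩
      | ins hT =>
          obtain ⟨a, hl1, _⟩ := syn_inv hT χ₁ hc₁ hn₁ rfl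
          exact absurd hl1 (by simp)

/-- Synthesised monitors never insert. -/
theorem synth_no_ins {ψ : Frm Act} (hc : Closed ψ) (hn : IsNF ψ)
    {μ : Option Act} {e' : Trn Act} (h : TStep (synth ψ) (none, μ) e') : False := by
  obtain ⟨a, hl1, _⟩ := syn_inv h ψ hc hn rfl
  exact absurd hl1 (by simp)

theorem unfstep_tstep {ψ χ : Frm Act} (h : UnfStep ψ χ) (l : Option Act × Option Act)
    (e' : Trn Act) : TStep (synth ψ) l e' ↔ TStep (synth χ) l e' := by
  cases h with
  | mk X b =>
      have hkey : Trn.tsubst (synth b) (X+1) (.fix (X+1) (synth b))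
          = synth (subst b X (.max X b)) := by
        rw [← synth_max]; exact tsubst_synth_comm X (.max X b) (by simp) b
      constructor
      · intro hT
        rw [synth_max] at hT
        cases hT with
        | fix hpre => rwa [hkey] at hpre
      · intro hT
        rw [synth_max]
        exact TStep.fix (by rwa [hkey])

theorem unf_tstep {ψ χ : Frm Act} (h : Unf ψ χ) (l : Option Act × Option Act)
    (e' : Trn Act) : TStep (synth ψ) l e' ↔ TStep (synth χ) l e' := by
  induction h with
  | refl => exact Iff.rfl
  | tail _ hstep ih => exact ih.trans (unfstep_tstep hstep l e')

theorem unf_conj_eq {n : ℕ} {f : Fin n → Frm Act} {z : Frm Act}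
    (h : Unf (.conj n f) z) : z = .conj n f := by
  rcases Relation.ReflTransGen.cases_head h with he | ⟨w, hw, _⟩
  · exact he.symm
  · exact absurd hw unfstep_conj

theorem unf_term_eq {x y z : Frm Act} (h1 : Unf x y) (h2 : Unf x z)
    (t1 : ∀ w, ¬ UnfStep y w) (t2 : ∀ w, ¬ UnfStep z w) : y = z := by
  rcases unf_total h1 h2 with h | h
  · rcases Relation.ReflTransGen.cases_head h with he | ⟨w, hw, _⟩
    · exact he
    · exact absurd hw (t1 _)
  · rcases Relation.ReflTransGen.cases_head h with he | ⟨w, hw, _⟩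
    · exact he.symm
    · exact absurd hw (t2 _)

theorem clean_eq_max {ψ : Frm Act} {X : ℕ} {d : Frm Act} (h : clean ψ = .max X d) :
    ∃ du, ψ = .max X du ∧ clean du = d := by
  cases ψ
  case max X' d' =>
    rw [clean_max] at h
    injection h with h1 h2
    exact ⟨d', by rw [h1], h2⟩
  all_goals cases h

theorem unfstep_clean_reflect {ψ χ' : Frm Act} (h : UnfStep (clean ψ) χ') :
    ∃ χu, UnfStep ψ χu ∧ clean χu = χ' := by
  cases h' : clean ψ with
  | max X d =>
      obtain ⟨du, rfl, hdu⟩ := clean_eq_max h'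
      rw [h'] at h
      cases h with
      | mk X b =>
          refine ⟨subst du X (.max X du), UnfStep.mk X du, ?_⟩
          rw [clean_subst, clean_max, hdu]
  | tt => rw [h'] at h; exact absurd h unfstep_tt
  | ff => rw [h'] at h; exact absurd h unfstep_ff
  | var Y => rw [h'] at h; cases h
  | conj n f => rw [h'] at h; exact absurd h unfstep_conj
  | box G k => rw [h'] at h; cases h

theorem unf_clean_reflect {ψ : Frm Act} {χ' : Frm Act} (h : Unf (clean ψ) χ') :
    ∃ χu, Unf ψ χu ∧ clean χu = χ' := by
  induction h with
  | refl => exact ⟨ψ, Relation.ReflTransGen.refl, rfl⟩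
  | tail _ hstep ih =>
      obtain ⟨χu, hU, rfl⟩ := ih
      obtain ⟨χu', hs, hc⟩ := unfstep_clean_reflect hstep
      exact ⟨χu', hU.tail hs, hc⟩

theorem clean_conj_canon {n : ℕ} {Gc : Fin n → Set Act} {kc : Fin n → Act → Frm Act}
    {ψu : Frm Act} (hn : IsNF ψu)
    (h : clean ψu = .conj n (fun j => .box (Gc j) (kc j))) :
    ∃ ku : Fin n → Act → Frm Act, ψu = .conj n (fun j => .box (Gc j) (ku j)) ∧
      ∀ j, ∀ b ∈ Gc j, kc j b = clean (ku j b) := by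
  cases ψu
  case conj n2 f2 =>
    obtain ⟨G2, k2, hf2, hdisj2, hk2⟩ := nf_conj_inv hn
    subst hf2
    rw [clean_conj] at h
    simp only [clean_box] at h
    obtain ⟨he, hcomp⟩ := conj_inj h
    subst he
    have hGk : ∀ j, G2 j = Gc j ∧
        (fun b => if b ∈ G2 j then clean (k2 j b) else Frm.tt) = kc j := by
      intro j
      have := hcomp j
      simp only [Fin.cast_refl, id_eq] at this
      injection this with h1 h2
      exact ⟨h1, h2⟩
    refine ⟨k2, ?_, ?_⟩
    · congr 1
      funext j
      rw [(hGk j).1]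
    · intro j b hb
      rw [← (hGk j).2]
      have hbG2 : b ∈ G2 j := by rw [(hGk j).1]; exact hb
      simp [hbG2]
  all_goals cases h

/-! ### The violation-tracking relation -/

inductive Lead : Frm Act → Frm Act → Prop
  | refl (ψ : Frm Act) : Lead ψ ψ
  | unf {ψ : Frm Act} {X : ℕ} {χ : Frm Act} :
      Lead ψ (.max X χ) → Lead ψ (subst χ X (.max X χ))
  | proj {ψ : Frm Act} {n : ℕ} {f : Fin n → Frm Act} (i : Fin n) :
      Lead ψ (.conj n f) → Lead ψ (f i)

theorem lead_char {ψ φ : Frm Act} (hc : Closed ψ) (hn : IsNF ψ) (h : Lead ψ φ) :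
    (∃ χ, Unf ψ χ ∧ φ = χ) ∨
    (∃ (χ : Frm Act) (n : ℕ) (f : Fin n → Frm Act) (i : Fin n),
      Unf ψ χ ∧ χ = .conj n f ∧ φ = f i) := by
  induction h with
  | refl => exact Or.inl ⟨ψ, Relation.ReflTransGen.refl, rfl⟩
  | unf hl ih =>
      rename_i X χ₀
      rcases ih with ⟨χ, hU, hφ⟩ | ⟨χ, n, f, i, hU, hχ, hφ⟩
      · subst hφ
        exact Or.inl ⟨_, hU.tail (UnfStep.mk X χ₀), rfl⟩
      · subst hχ
        obtain ⟨G, k, hf, _, _⟩ := nf_conj_inv (unf_closed_nf hU hc hn).2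
        rw [hf] at hφ
        cases hφ
  | proj i hl ih =>
      rcases ih with ⟨χ, hU, hφ⟩ | ⟨χ, n, f, j, hU, hχ, hφ⟩
      · exact Or.inr ⟨χ, _, _, i, hU, hφ.symm, rfl⟩
      · subst hχ
        obtain ⟨G, k, hf, _, _⟩ := nf_conj_inv (unf_closed_nf hU hc hn).2
        rw [hf] at hφ
        cases hφ

/-- The monitored-state satisfaction relation used for soundness. -/
def Rs (L : LTS Act) : (Trn Act × L.S) → Frm Act → Prop := fun s φ =>
  ∃ ψ₀ ψ : Frm Act, Closed ψ₀ ∧ IsNF ψ₀ ∧ ψ₀ ≠ .ff ∧ Unf ψ₀ ψ ∧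
    s.1 = synth ψ ∧ Lead (clean ψ₀) φ

theorem Rs_satrel (L : LTS Act) : IsSatRel (instLTS L) (Rs L) := by
  refine ⟨?_, ?_, ?_, ?_⟩
  · -- no state violates ff
    rintro p ⟨ψ₀, ψ, hc, hn, hff, hU, hs, hl⟩
    have hcC := closed_clean hc
    have hnC := nf_clean hn
    rcases lead_char hcC hnC hl with ⟨χ, hU', hφ⟩ | ⟨χ, n, f, i, hU', hχ, hφ⟩
    · exact unf_ne_ff hU' hcC hnC (fun h => hff (clean_eq_ff_iff.1 h)) hφ.symm
    · subst hχ
      obtain ⟨G, k, hf, _, _⟩ := nf_conj_inv (unf_closed_nf hU' hcC hnC).2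
      rw [hf] at hφ
      cases hφ
  · -- conjunction
    rintro p n f ⟨ψ₀, ψ, hc, hn, hff, hU, hs, hl⟩ i
    exact ⟨ψ₀, ψ, hc, hn, hff, hU, hs, hl.proj i⟩
  · -- box
    rintro ⟨e, q⟩ G k ⟨ψ₀, ψ, hc0, hn0, hff0, hUψ, hs, hl⟩ a haG s' hw
    have hcC := closed_clean hc0
    have hnC := nf_clean hn0
    rcases lead_char hcC hnC hl with ⟨χ, hU', hφ⟩ | ⟨χ, n, f, i, hUc0, hχ, hφ⟩
    · subst hφ
      cases (unf_closed_nf hU' hcC hnC).2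
    · subst hχ
      obtain ⟨Gc, kc, hfc, hdisjC, hkC⟩ := nf_conj_inv (unf_closed_nf hUc0 hcC hnC).2
      subst hfc
      injection hφ with hG hk
      subst hG
      subst hk
      obtain ⟨s₁, s₂, ht1, hstep, ht2⟩ := hw
      obtain ⟨hcψ, hnψ⟩ := unf_closed_nf hUψ hc0 hn0
      obtain ⟨ψ₁, q₁, rfl, hU1⟩ := tau_inv ht1 ψ hcψ hnψ hs
      obtain ⟨hc1, hn1⟩ := unf_closed_nf hU1 hcψ hnψ
      have hU1c : Unf (clean ψ₁) (.conj n (fun j => .box (Gc j) (kc j))) :=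
        unf_to_terminal (clean_unf (hUψ.trans hU1)) hUc0 (fun w => unfstep_conj)
      obtain ⟨χu, hUu, hcleanu⟩ := unf_clean_reflect hU1c
      obtain ⟨hcu, hnu⟩ := unf_closed_nf hUu hc1 hn1
      obtain ⟨ku, rfl, hkrel⟩ := clean_conj_canon hnu hcleanu
      have hiff := unf_tstep hUu
      cases hstep with
      | trn htr hT =>
          have hT' := (hiff _ _).1 hT
          obtain ⟨a', hl1, hrest⟩ := syn_inv hT' _ hcu hnu rfl
          rcases hrest with ⟨h2, _, χ', hU', hχ'⟩ | ⟨n2, G2, k2, i2, hU2, hdisj2, hk2, haG2, hbr⟩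
          · have := unf_conj_eq hU'
            rcases hχ' with rfl | rfl <;> cases this
          · have hconj := unf_conj_eq hU2
            obtain ⟨he, hcomp⟩ := conj_inj hconj
            subst he
            have hpt := hcomp i2
            simp only [Fin.cast_refl, id_eq] at hpt
            injection hpt with hG2 hk2'
            rcases hbr with ⟨hffk, h2, he'⟩ | ⟨hnffk, h2, he'⟩
            · exact absurd h2 (by simp)
            · have ha' : a' = a := by
                have : some a = some a' := h2
                injection this with h3
                exact h3.symm
              rw [ha'] at haG2 he' hnffk
              have haGc2 : a ∈ Gc i2 := by rw [← hG2]; exact haG2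
              have hii : i2 = i := by
                by_contra hne
                exact hdisjC i2 i hne a haGc2 haG
              subst hii
              rw [hk2'] at he' hnffk
              have hcku : Closed (ku i2 a) := closed_conj_comp hcu i2 haGc2
              have hnku : IsNF (ku i2 a) := by
                rw [← hk2']
                exact hk2 i2 a haG2
              obtain ⟨ψ₂, q₂', hs', hU₂⟩ := tau_inv ht2 (ku i2 a) hcku hnku he'
              refine ⟨ku i2 a, ψ₂, hcku, hnku, hnffk, hU₂, by rw [hs'], ?_⟩
              rw [← hkrel i2 a haGc2]
              exact Lead.refl _
      | ins hT => exact (synth_no_ins hc1 hn1 hT).elim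
      | ter htr hno hnoi =>
          obtain ⟨μ, e₂, hT⟩ := conj_step_exists (G := Gc) (k := ku) i haG
          exact absurd ((hiff _ _).2 hT) (hno μ e₂)
  · -- max
    rintro p X φ ⟨ψ₀, ψ, hc, hn, hff, hU, hs, hl⟩
    exact ⟨ψ₀, ψ, hc, hn, hff, hU, hs, hl.unf⟩

/-- Soundness of the synthesised monitor. -/
theorem synth_sound (L : LTS Act) (φ : Frm Act) (hc : Closed φ) (hn : IsNF φ)
    (hsat : SatIn L φ) (p : L.S) : (synth φ, p) ∈ Sem (instLTS L) φ := by
  have hff : φ ≠ .ff := by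
    rintro rfl
    obtain ⟨w, hw⟩ := hsat
    simpa [Sem, sem] using hw
  have hseed : Rs L (synth φ, p) (msubst φ (fun Y => .var Y)) :=
    ⟨φ, φ, hc, hn, hff, Relation.ReflTransGen.refl, rfl, Lead.refl _⟩
  have h := bridge (L := instLTS L) (R := Rs L) (Rs_satrel L) φ (fun Y => .var Y)
    (fun Y => Or.inr rfl) (fun Y hY => absurd (hc ▸ hY) (Set.notMem_empty Y))
    (synth φ, p) hseed
  unfold Sem
  rw [sem_closed_congr (instLTS L) hc _ (fun Y => {q | Rs L q (.var Y)})]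
  exact h

/-- The transparency bisimulation. -/
def Rt (L : LTS Act) : (Trn Act × L.S) → L.S → Prop := fun s p =>
  s.2 = p ∧ (s.1 = .id ∨
    ∃ ψ : Frm Act, Closed ψ ∧ IsNF ψ ∧ s.1 = synth ψ ∧ p ∈ Sem L ψ)

theorem sem_box_elim {L : LTS Act} {n : ℕ} {G : Fin n → Set Act}
    {k : Fin n → Act → Frm Act} {q : L.S}
    (h : q ∈ Sem L (.conj n (fun j => .box (G j) (k j)))) (i : Fin n) {a : Act}
    (ha : a ∈ G i) {q' : L.S} (hw : WStep L q a q') : q' ∈ Sem L (k i a) := by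
  simp only [Sem, sem, Set.mem_iInter, Set.mem_setOf_eq] at h
  exact h i a ha q' hw

theorem Sem_ff_empty {L : LTS Act} {q : L.S} (h : q ∈ Sem L (.ff : Frm Act)) : False := by
  simpa [Sem, sem] using h

theorem Rt_bisim (L : LTS Act) : IsBisim (instLTS L) L (Rt L) := by
  rintro ⟨e, q⟩ p ⟨hq, hcase⟩
  simp only at hq
  subst hq
  constructor
  · -- forward
    intro μ s' hstep
    rcases hcase with he | ⟨ψ, hc, hn, he, hsem⟩ <;> simp only at he <;> subst he
    · cases hstep with
      | trn htr hT =>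
          cases hT
          exact ⟨_, htr, rfl, Or.inl rfl⟩
      | asy htr => exact ⟨_, htr, rfl, Or.inl rfl⟩
      | ins hT => cases hT
      | ter htr hno hnoi => exact absurd (TStep.id _) (hno _ _)
    · cases hstep with
      | trn htr hT =>
          rename_i e₂ p₂ a₀
          obtain ⟨a', hl1, hrest⟩ := syn_inv hT ψ hc hn rfl
          have ha0 : a₀ = a' := by injection hl1
          subst ha0
          rcases hrest with ⟨h2, he', _⟩ | ⟨n, G, k, i, hU, hdisj, hk, haG, hbr⟩
          · subst h2
            subst he'
            exact ⟨_, htr, rfl, Or.inl rfl⟩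
          · have hsem' : q ∈ Sem L (.conj n fun j => .box (G j) (k j)) := by
              rw [← unf_sem hU hc hn L]; exact hsem
            have hwq : WStep L q a₀ _ := ⟨q, _, Relation.ReflTransGen.refl, htr,
              Relation.ReflTransGen.refl⟩
            have hk' := sem_box_elim hsem' i haG hwq
            rcases hbr with ⟨hffk, h2, he'⟩ | ⟨hnffk, h2, he'⟩
            · rw [hffk] at hk'
              exact (Sem_ff_empty hk').elim
            · subst h2
              subst he'
              obtain ⟨hcχ, hnχ⟩ := unf_closed_nf hU hc hn
              exact ⟨_, htr, rfl, Or.inr ⟨k i a₀, closed_conj_comp hcχ i haG,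
                hk i a₀ haG, rfl, hk'⟩⟩
      | asy htr => exact ⟨_, htr, rfl, Or.inr ⟨ψ, hc, hn, rfl, Sem_tau hsem htr⟩⟩
      | ins hT => exact (synth_no_ins hc hn hT).elim
      | ter htr hno hnoi => exact ⟨_, htr, rfl, Or.inl rfl⟩
  · -- backward
    intro μ p' hstep
    rcases hcase with he | ⟨ψ, hc, hn, he, hsem⟩ <;> simp only at he <;> subst he
    · cases μ with
      | none => exact ⟨(.id, p'), IStep.asy hstep, rfl, Or.inl rfl⟩
      | some a => exact ⟨(.id, p'), IStep.trn hstep (TStep.id a), rfl, Or.inl rfl⟩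
    · cases μ with
      | none =>
          exact ⟨(synth ψ, p'), IStep.asy hstep, rfl,
            Or.inr ⟨ψ, hc, hn, rfl, Sem_tau hsem hstep⟩⟩
      | some a =>
          by_cases hex : ∃ μ' e₂, TStep (synth ψ) (some a, μ') e₂
          · obtain ⟨μ', e₂, hT⟩ := hex
            obtain ⟨a', hl1, hrest⟩ := syn_inv hT ψ hc hn rfl
            have ha' : a = a' := by injection hl1
            subst ha'
            rcases hrest with ⟨h2, he', _⟩ | ⟨n, G, k, i, hU, hdisj, hk, haG, hbr⟩
            · subst h2
              subst he'
              exact ⟨(.id, p'), IStep.trn hstep hT, rfl, Or.inl rfl⟩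
            · have hsem' : q ∈ Sem L (.conj n fun j => .box (G j) (k j)) := by
                rw [← unf_sem hU hc hn L]; exact hsem
              have hwq : WStep L q a p' := ⟨q, p', Relation.ReflTransGen.refl, hstep,
                Relation.ReflTransGen.refl⟩
              have hk' := sem_box_elim hsem' i haG hwq
              rcases hbr with ⟨hffk, h2, he'⟩ | ⟨hnffk, h2, he'⟩
              · rw [hffk] at hk'
                exact (Sem_ff_empty hk').elim
              · subst h2
                subst he'
                obtain ⟨hcχ, hnχ⟩ := unf_closed_nf hU hc hn
                exact ⟨(synth (k i a), p'), IStep.trn hstep hT, rfl,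
                  Or.inr ⟨k i a, closed_conj_comp hcχ i haG, hk i a haG, rfl, hk'⟩⟩
          · exact ⟨(.id, p'), IStep.ter hstep (fun μ' e₂ h => hex ⟨μ', e₂, h⟩)
              (fun μ' e₂ h => synth_no_ins hc hn h), rfl, Or.inl rfl⟩

theorem synth_transparent (L : LTS Act) (φ : Frm Act) (hc : Closed φ) (hn : IsNF φ)
    (p : L.S) (hp : p ∈ Sem L φ) : Bisim (instLTS L) L (synth φ, p) p :=
  ⟨Rt L, Rt_bisim L, rfl, Or.inr ⟨φ, hc, hn, rfl, hp⟩⟩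

end Aux

/-- For every closed SHMLnf formula φ, the synthesised transducer
⟦φ⟧e enforces φ (hence SHMLnf is enforceable): (i) soundness — for every system
p, if φ is satisfiable then ⟦φ⟧e[p] ∈ ⟦φ⟧; and (ii) transparency — for every
system p, if p ∈ ⟦φ⟧ then ⟦φ⟧e[p] ∼ p. -/
theorem shmlnf_enforceable (Act : Type) (L : LTS Act) (φ : Frm Act)
    (hclosed : φ.Closed) (hnf : φ.IsNF) :
    (∀ p : L.S, SatIn L φ → (synth φ, p) ∈ Sem (instLTS L) φ) ∧
    (∀ p : L.S, p ∈ Sem L φ → Bisim (instLTS L) L (synth φ, p) p) :=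
  ⟨fun p hsat => synth_sound L φ hclosed hnf hsat p,
   fun p hp => synth_transparent L φ hclosed hnf p hp⟩

end Enf
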